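/- There exists a measurable map C : X × ℕ × ℤ^d → (subsets of ℤ^d) such that for all γ ∈ X, all n ≥ 1 and all x, y, z ∈ ℤ^d: (i) x ∈ C(γ, n, x); (ii) if C(γ, n, x) ∩ C(γ, n, y) ≠ ∅ then C(γ, n, x) = C(γ, n, y); (iii) C(γ, n, x) ⊆ C(γ, n+1, x); (iv) C(θ^z γ, n, θ^z x) = θ^z C(γ, n, x); and such that for ℙ-a.e. γ, every set C(γ, n, x) is finite and ∪_{n ≥ 1} C(γ, n, 0) = ℤ^d. (That is, a locally finite connected clumping rule exists almost surely.) -/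

import Mathlib

open MeasureTheory ENNReal

noncomputable section

/-- Sites: the lattice `ℤ^d`. -/
abbrev Site (d : ℕ) := Fin d → ℤ

/-- Configurations: elements of `{0,1}^{ℤ^d}`, encoded with `Bool`. -/
abbrev Config (d : ℕ) := Site d → Bool

/-- The translation `θ^z` acting on configurations: `(θ^z γ)(x) = γ(x - z)`. -/
def shiftCfg {d : ℕ} (z : Site d) (γ : Config d) : Config d := fun x => γ (x - z)

/-- `φ` is a matching on `γ`: an involutive bijection matching ones to zeros. -/
def IsMatching {d : ℕ} (γ : Config d) (φ : Site d → Site d) : Prop :=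
  Function.Bijective φ ∧ (∀ x, φ (φ x) = x) ∧ ∀ x, γ (φ x) = !(γ x)

/-- `Φ` is a matching rule with respect to the measure `P`. -/
def IsMatchingRule {d : ℕ} (P : Measure (Config d)) (Φ : Config d → Site d → Site d) : Prop :=
  (∀ x : Site d, Measurable fun γ => Φ γ x) ∧ ∀ᵐ γ ∂P, IsMatching γ (Φ γ)

/-- `Φ` is translation-equivariant with respect to `P`. -/
def IsEquivariant {d : ℕ} (P : Measure (Config d)) (Φ : Config d → Site d → Site d) : Prop :=
  ∀ z x : Site d, ∀ᵐ γ ∂P, Φ (shiftCfg z γ) (x + z) = Φ γ x + z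

/-- `P` is the product measure with i.i.d. Bernoulli(1/2) coordinates, characterized by
its values on cylinder events. -/
def IsBernoulliHalfProduct {d : ℕ} (P : Measure (Config d)) : Prop :=
  IsProbabilityMeasure P ∧
    ∀ (s : Finset (Site d)) (f : Site d → Bool),
      P {γ | ∀ x ∈ s, γ x = f x} = (1 / 2 : ℝ≥0∞) ^ s.card

/-- `Z_Φ(γ) = ‖Φ(γ, 0)‖`, the `ℓ^∞` distance from the origin to its partner. -/
def ZΦ {d : ℕ} (Φ : Config d → Site d → Site d) (γ : Config d) : ℝ := ‖Φ γ 0‖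

/-- Embedding of the lattice in `ℝ^d`. -/
def toR {d : ℕ} (x : Site d) : Fin d → ℝ := fun i => (x i : ℝ)

/-- The first standard basis vector `e₁`. -/
def e1 (d : ℕ) : Site d := fun i => if (i : ℕ) = 0 then 1 else 0

/-- `x` is a `k`-seed for `γ`. -/
def IsSeed {d : ℕ} (γ : Config d) (k : ℕ) (x : Site d) : Prop :=
  γ x = true ∧ ∀ n : ℕ, 1 ≤ n → n ≤ k - 1 → γ (x + (n : ℤ) • e1 d) = false

/-- `r_k = (2^k k²)^{1/d} + 1/2`. -/
def rr (d k : ℕ) : ℝ := ((2 : ℝ) ^ k * (k : ℝ) ^ 2) ^ ((d : ℝ)⁻¹) + 1 / 2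

/-- The shift `s_k = ⌊100 r_k⌋ e₁`. -/
def ss (d k : ℕ) : Site d := ⌊(100 : ℝ) * rr d k⌋ • e1 d

/-- `W_k(γ)`: the union of all `k`-cutters. -/
def cutters {d : ℕ} (γ : Config d) (k : ℕ) : Set (Fin d → ℝ) :=
  ⋃ x ∈ {x : Site d | IsSeed γ k (x - ss d k)}, {y : Fin d → ℝ | ‖y - toR x‖ = rr d k}

/-- The `k`-blob containing the point `p ∈ ℝ^d`: the connected component of `p` in the
complement of all `j`-cutters with `j > k`. -/
def blob {d : ℕ} (γ : Config d) (k : ℕ) (p : Fin d → ℝ) : Set (Fin d → ℝ) :=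
  connectedComponentIn (⋃ j ∈ {j : ℕ | k < j}, cutters γ j)ᶜ p

/-- The `k`-clump of a site `x`: the lattice points of the `k`-blob containing `x`. -/
def clump {d : ℕ} (γ : Config d) (k : ℕ) (x : Site d) : Set (Site d) :=
  {y : Site d | toR y ∈ blob γ k (toR x)}

/-- The event `E_k`: the cube `S(-s_k, r_k - 1)` contains a `k`-seed. -/
def Ek (d k : ℕ) : Set (Config d) :=
  {γ | ∃ y : Site d, IsSeed γ k y ∧ ‖toR y + toR (ss d k)‖ ≤ rr d k - 1}

/-- A `k`-seed lying in the annulus `S(-s_k, r_k + s) \ S(-s_k, r_k - s)`. -/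
def SeedInAnnulus {d : ℕ} (γ : Config d) (k : ℕ) (s : ℝ) (y : Site d) : Prop :=
  IsSeed γ k y ∧ ‖toR y + toR (ss d k)‖ ≤ rr d k + s ∧ rr d k - s < ‖toR y + toR (ss d k)‖

/-- The event `U_k(s)`: `S(-s_k, r_k + s) \ S(-s_k, r_k - s)` contains a `k`-seed. -/
def Uk (d : ℕ) (k : ℕ) (s : ℝ) : Set (Config d) :=
  {γ | ∃ y : Site d, SeedInAnnulus γ k s y}

/-- The event `C_k(s) = ∪_{j ≥ k} U_j(s)`. -/
def Ck (d : ℕ) (k : ℕ) (s : ℝ) : Set (Config d) :=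
  {γ | ∃ j : ℕ, k ≤ j ∧ γ ∈ Uk d j s}

/-- `±1`-valued spin `2γ(x) - 1`. -/
def pm1 {d : ℕ} (γ : Config d) (y : Site d) : ℤ := if γ y then 1 else -1

/-- `Φ` matches maximally within clumps: a.s. every clump is finite and the number of
sites of each `k`-clump `L` matched outside `L` equals `|Σ_{x ∈ L} (2γ(x) - 1)|`. -/
def MatchesMaximally {d : ℕ} (P : Measure (Config d))
    (Φ : Config d → Site d → Site d) : Prop :=
  ∀ᵐ γ ∂P, ∀ k : ℕ, 1 ≤ k → ∀ x : Site d,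
    (clump γ k x).Finite ∧
      (({y ∈ clump γ k x | Φ γ y ∉ clump γ k x}.ncard : ℤ)
        = |∑ᶠ y ∈ clump γ k x, pm1 γ y|)



namespace ClumpAux

variable {d : ℕ}

/-- pattern length at scale `j` -/
def mm (d j : ℕ) : ℕ := (2 * d - 1) * j

/-- shell radius at scale `j` -/
def RR (d j : ℕ) : ℕ := mm d j * 4 ^ j

/-- ℓ∞ distance on the lattice -/
def dinf (x y : Site d) : ℕ := Finset.univ.sup fun i => (x i - y i).natAbs

/-- `c` is a seed at scale `j` -/
def seed (γ : Config d) (j : ℕ) (c : Site d) : Prop :=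
  ∀ i : ℕ, i < mm d j → γ (c + (i : ℤ) • e1 d) = decide (i = 0)

def inShell (γ : Config d) (j : ℕ) (z : Site d) : Prop :=
  ∃ c, seed γ j c ∧ dinf z c = RR d j

def wall (γ : Config d) (n : ℕ) (z : Site d) : Prop := ∃ j, n < j ∧ inShell γ j z

def rel (γ : Config d) (n : ℕ) (a b : Site d) : Prop :=
  dinf a b = 1 ∧ ¬ wall γ n a ∧ ¬ wall γ n b

/-- the clump -/
def CC (γ : Config d) (n : ℕ) (x : Site d) : Set (Site d) :=
  {y | Relation.ReflTransGen (rel γ n) x y}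

/- ### basic dinf lemmas -/

lemma dinf_comm (x y : Site d) : dinf x y = dinf y x := by
  unfold dinf
  congr 1; funext i; rw [← Int.natAbs_neg]; ring_nf

lemma dinf_triangle (x y z : Site d) : dinf x z ≤ dinf x y + dinf y z := by
  unfold dinf
  refine Finset.sup_le fun i _ => ?_
  calc (x i - z i).natAbs = ((x i - y i) + (y i - z i)).natAbs := by ring_nf
    _ ≤ (x i - y i).natAbs + (y i - z i).natAbs := Int.natAbs_add_le _ _
    _ ≤ _ := add_le_add
      (Finset.le_sup (f := fun i => (x i - y i).natAbs) (Finset.mem_univ i))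
      (Finset.le_sup (f := fun i => (y i - z i).natAbs) (Finset.mem_univ i))

lemma dinf_shift (x y z : Site d) : dinf (x + z) (y + z) = dinf x y := by
  unfold dinf; congr 1; funext i; congr 1; simp

lemma dinf_sub (x y z : Site d) : dinf (x - z) (y - z) = dinf x y := by
  unfold dinf; congr 1; funext i; congr 1; simp

lemma dinf_eq_zero {x y : Site d} (h : dinf x y = 0) : x = y := by
  funext i
  have : (x i - y i).natAbs ≤ 0 := h ▸ Finset.le_sup (f := fun i => (x i - y i).natAbs) (Finset.mem_univ i)
  have := Int.natAbs_eq_zero.mp (Nat.le_zero.mp this)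
  omega

/- ### shift equivariance -/

lemma seed_shift (z : Site d) (γ : Config d) (j : ℕ) (c : Site d) :
    seed (shiftCfg z γ) j c ↔ seed γ j (c - z) := by
  unfold seed shiftCfg
  constructor <;> intro h i hi <;> have := h i hi
  · rw [show c - z + (i:ℤ) • e1 d = c + (i:ℤ) • e1 d - z by ring]; exact this
  · rw [show c + (i:ℤ) • e1 d - z = c - z + (i:ℤ) • e1 d by ring]; exact this

lemma inShell_shift (z : Site d) (γ : Config d) (j : ℕ) (a : Site d) :
    inShell (shiftCfg z γ) j a ↔ inShell γ j (a - z) := by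
  constructor
  · rintro ⟨c, hc, hd'⟩
    exact ⟨c - z, (seed_shift z γ j c).mp hc, by rw [dinf_sub]; exact hd'⟩
  · rintro ⟨c, hc, hd'⟩
    refine ⟨c + z, (seed_shift z γ j (c + z)).mpr (by simpa using hc), ?_⟩
    rw [← dinf_sub a (c + z) z]; simpa using hd'

lemma wall_shift (z : Site d) (γ : Config d) (n : ℕ) (a : Site d) :
    wall (shiftCfg z γ) n a ↔ wall γ n (a - z) := by
  unfold wall; simp_rw [inShell_shift]

lemma rel_shift (z : Site d) (γ : Config d) (n : ℕ) (a b : Site d) :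
    rel (shiftCfg z γ) n a b ↔ rel γ n (a - z) (b - z) := by
  unfold rel; rw [dinf_sub, wall_shift, wall_shift]

lemma rtg_shift (z : Site d) (γ : Config d) (n : ℕ) (a b : Site d) :
    Relation.ReflTransGen (rel (shiftCfg z γ) n) a b ↔
      Relation.ReflTransGen (rel γ n) (a - z) (b - z) := by
  constructor
  · intro h
    induction h with
    | refl => exact Relation.ReflTransGen.refl
    | tail _ hr ih => exact ih.tail ((rel_shift z γ n _ _).mp hr)
  · intro h
    have : ∀ u v : Site d, Relation.ReflTransGen (rel γ n) u v →
        Relation.ReflTransGen (rel (shiftCfg z γ) n) (u + z) (v + z) := by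
      intro u v h
      induction h with
      | refl => exact Relation.ReflTransGen.refl
      | tail _ hr ih =>
        exact ih.tail ((rel_shift z γ n _ _).mpr (by simpa using hr))
    have := this _ _ h
    simpa using this

/- ### deterministic properties -/

lemma rel_symm (γ : Config d) (n : ℕ) : Symmetric (rel γ n) := by
  rintro a b ⟨h1, h2, h3⟩; exact ⟨by rw [dinf_comm]; exact h1, h3, h2⟩

lemma mem_CC_self (γ : Config d) (n : ℕ) (x : Site d) : x ∈ CC γ n x :=
  Relation.ReflTransGen.refl

lemma CC_glue (γ : Config d) (n : ℕ) {x y : Site d}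
    (h : (CC γ n x ∩ CC γ n y).Nonempty) : CC γ n x = CC γ n y := by
  obtain ⟨w, hx, hy⟩ := h
  haveI : Std.Symm (rel γ n) := ⟨fun a b h => rel_symm γ n h⟩
  have hsymm : ∀ {a b : Site d}, Relation.ReflTransGen (rel γ n) a b →
      Relation.ReflTransGen (rel γ n) b a := fun h => Std.Symm.symm _ _ h
  have hxy : Relation.ReflTransGen (rel γ n) x y := hx.trans (hsymm hy)
  ext u
  exact ⟨fun hu => (hsymm hxy).trans hu, fun hu => hxy.trans hu⟩

lemma wall_antitone (γ : Config d) {n n' : ℕ} (h : n ≤ n') {z : Site d}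
    (hw : wall γ n' z) : wall γ n z := by
  obtain ⟨j, hj, hs⟩ := hw; exact ⟨j, lt_of_le_of_lt h hj, hs⟩

lemma CC_mono (γ : Config d) (n : ℕ) (x : Site d) : CC γ n x ⊆ CC γ (n + 1) x := by
  intro y hy
  refine Relation.ReflTransGen.mono ?_ _ _ hy
  rintro a b ⟨h1, h2, h3⟩
  exact ⟨h1, fun hw => h2 (wall_antitone γ (Nat.le_succ n) hw),
    fun hw => h3 (wall_antitone γ (Nat.le_succ n) hw)⟩

lemma CC_shift (z : Site d) (γ : Config d) (n : ℕ) (x : Site d) :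
    CC (shiftCfg z γ) n (x + z) = (· + z) '' CC γ n x := by
  ext y
  constructor
  · intro hy
    have := (rtg_shift z γ n (x + z) y).mp hy
    simp only [add_sub_cancel_right] at this
    exact ⟨y - z, this, by simp⟩
  · rintro ⟨w, hw, rfl⟩
    exact (rtg_shift z γ n (x + z) (w + z)).mpr (by simpa using (show Relation.ReflTransGen (rel γ n) x w from hw))

/- ### measurability -/

lemma measurable_seedEvent (j : ℕ) (c : Site d) :
    MeasurableSet {γ : Config d | seed γ j c} := by
  have : {γ : Config d | seed γ j c} =
      ⋂ (i : ℕ), ⋂ (_ : i < mm d j),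
        (fun γ : Config d => γ (c + (i : ℤ) • e1 d)) ⁻¹' {decide (i = 0)} := by
    ext γ; simp [seed]
  rw [this]
  exact MeasurableSet.iInter fun i => MeasurableSet.iInter fun _ =>
    (measurable_pi_apply _) (measurableSet_singleton _)

lemma measurable_wallEvent (n : ℕ) (z : Site d) :
    MeasurableSet {γ : Config d | wall γ n z} := by
  have : {γ : Config d | wall γ n z} =
      ⋃ (j : ℕ), ⋃ (_ : n < j), ⋃ (c : Site d), ⋃ (_ : dinf z c = RR d j),
        {γ : Config d | seed γ j c} := by
    ext γ; simp [wall, inShell]; tauto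
  rw [this]
  exact MeasurableSet.iUnion fun j => MeasurableSet.iUnion fun _ =>
    MeasurableSet.iUnion fun c => MeasurableSet.iUnion fun _ => measurable_seedEvent j c

lemma measurable_relEvent (n : ℕ) (a b : Site d) :
    MeasurableSet {γ : Config d | rel γ n a b} := by
  have : {γ : Config d | rel γ n a b} = {γ : Config d | dinf a b = 1} ∩
      ({γ : Config d | wall γ n a}ᶜ ∩ {γ : Config d | wall γ n b}ᶜ) := by
    ext γ; simp [rel, and_assoc]
  rw [this]
  exact (MeasurableSet.const _).inter
    (((measurable_wallEvent n a).compl).inter ((measurable_wallEvent n b).compl))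

lemma measurable_chainEvent (n : ℕ) (l : List (Site d)) (x : Site d) :
    MeasurableSet {γ : Config d | List.Chain (rel γ n) x l} := by
  induction l generalizing x with
  | nil =>
    have : {γ : Config d | List.Chain (rel γ n) x []} = Set.univ := by ext γ; simp [List.Chain]
    rw [this]; exact MeasurableSet.univ
  | cons b t ih =>
    have : {γ : Config d | List.Chain (rel γ n) x (b :: t)} =
        {γ : Config d | rel γ n x b} ∩ {γ : Config d | List.Chain (rel γ n) b t} := by
      ext γ; simp [List.Chain, List.chain_cons]
    rw [this]
    exact (measurable_relEvent n x b).inter (ih b)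

lemma measurable_CC (n : ℕ) (x y : Site d) :
    MeasurableSet {γ : Config d | y ∈ CC γ n x} := by
  have : {γ : Config d | y ∈ CC γ n x} =
      ⋃ (l : List (Site d)), ⋃ (_ : (x :: l).getLast (List.cons_ne_nil _ _) = y),
        {γ : Config d | List.Chain (rel γ n) x l} := by
    ext γ
    simp only [Set.mem_iUnion, Set.mem_setOf_eq]
    constructor
    · intro h
      obtain ⟨l, hc, hl⟩ := List.exists_isChain_cons_of_relationReflTransGen h
      exact ⟨l, hl, hc⟩
    · rintro ⟨l, hl, hc⟩
      exact List.relationReflTransGen_of_exists_isChain_cons l hc hl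
  rw [this]
  exact MeasurableSet.iUnion fun l => MeasurableSet.iUnion fun _ => measurable_chainEvent n l x


lemma chung_erdos {α : Type*} [MeasurableSpace α] (μ : Measure α) [IsProbabilityMeasure μ]
    {ι : Type*} [DecidableEq ι] (I : Finset ι) (A : ι → Set α) (hA : ∀ i, MeasurableSet (A i)) :
    (∑ i ∈ I, μ (A i)) ^ 2 ≤ (∑ i ∈ I, ∑ k ∈ I, μ (A i ∩ A k)) * μ (⋃ i ∈ I, A i) := by
  classical
  set U : Set α := ⋃ i ∈ I, A i with hU
  have hUm : MeasurableSet U := MeasurableSet.biUnion I.countable_toSet fun i _ => hA i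
  set f : α → ℝ≥0∞ := fun a => ∑ i ∈ I, (A i).indicator (fun _ => (1:ℝ≥0∞)) a with hf
  set g : α → ℝ≥0∞ := U.indicator (fun _ => (1:ℝ≥0∞)) with hg
  have hfm : Measurable f := by
    apply Finset.measurable_sum
    exact fun i _ => measurable_const.indicator (hA i)
  have hgm : Measurable g := measurable_const.indicator hUm
  have hfg : ∀ a, (f * g) a = f a := by
    intro a
    by_cases ha : a ∈ U
    · simp [hg, Set.indicator_of_mem ha]
    · have : f a = 0 := by
        apply Finset.sum_eq_zero
        intro i hi
        have : a ∉ A i := fun h => ha (Set.mem_biUnion hi h)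
        simp [Set.indicator_of_notMem this]
      simp [this]
  have hT : ∫⁻ a, f a ∂μ = ∑ i ∈ I, μ (A i) := by
    rw [hf, lintegral_finset_sum _ (fun i _ => measurable_const.indicator (hA i))]
    refine Finset.sum_congr rfl fun i _ => ?_
    rw [lintegral_indicator (hA i) _, setLIntegral_one]
  have hS : ∫⁻ a, f a ^ (2:ℝ) ∂μ = ∑ i ∈ I, ∑ k ∈ I, μ (A i ∩ A k) := by
    have h2 : ∀ a, f a ^ (2:ℝ) =
        ∑ i ∈ I, ∑ k ∈ I, (A i ∩ A k).indicator (fun _ => (1:ℝ≥0∞)) a := by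
      intro a
      rw [show (2:ℝ) = ((2:ℕ):ℝ) by norm_num, ENNReal.rpow_natCast, sq, hf,
        Finset.sum_mul_sum]
      refine Finset.sum_congr rfl fun i _ => Finset.sum_congr rfl fun k _ => ?_
      by_cases hi : a ∈ A i <;> by_cases hk : a ∈ A k <;>
        simp [Set.indicator, hi, hk]
    calc ∫⁻ a, f a ^ (2:ℝ) ∂μ
        = ∫⁻ a, ∑ i ∈ I, ∑ k ∈ I, (A i ∩ A k).indicator (fun _ => (1:ℝ≥0∞)) a ∂μ := by
          congr 1; funext a; exact h2 a
      _ = ∑ i ∈ I, ∑ k ∈ I, μ (A i ∩ A k) := by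
          rw [lintegral_finset_sum _ (fun i _ => Finset.measurable_sum _
            (fun k _ => measurable_const.indicator ((hA i).inter (hA k))))]
          refine Finset.sum_congr rfl fun i _ => ?_
          rw [lintegral_finset_sum _ (fun k _ => measurable_const.indicator ((hA i).inter (hA k)))]
          refine Finset.sum_congr rfl fun k _ => ?_
          rw [lintegral_indicator ((hA i).inter (hA k)) _, setLIntegral_one]
  have hG : ∫⁻ a, g a ^ (2:ℝ) ∂μ = μ U := by
    have h3 : ∀ a, g a ^ (2:ℝ) = U.indicator (fun _ => (1:ℝ≥0∞)) a := by
      intro a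
      by_cases ha : a ∈ U
      · simp [hg, Set.indicator_of_mem ha, ENNReal.one_rpow]
      · simp [hg, Set.indicator_of_notMem ha,
          ENNReal.zero_rpow_of_pos (by norm_num : (0:ℝ) < 2)]
    calc ∫⁻ a, g a ^ (2:ℝ) ∂μ = ∫⁻ a, U.indicator (fun _ => (1:ℝ≥0∞)) a ∂μ := by
          congr 1; funext a; exact h3 a
      _ = μ U := by rw [lintegral_indicator hUm _, setLIntegral_one]
  have hpq : Real.HolderConjugate 2 2 := Real.HolderConjugate.two_two
  have hCS := ENNReal.lintegral_mul_le_Lp_mul_Lq μ hpq hfm.aemeasurable hgm.aemeasurable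
  have hCS' : (∑ i ∈ I, μ (A i)) ≤
      (∑ i ∈ I, ∑ k ∈ I, μ (A i ∩ A k)) ^ (1/2 : ℝ) * (μ U) ^ (1/2 : ℝ) := by
    calc (∑ i ∈ I, μ (A i)) = ∫⁻ a, (f * g) a ∂μ := by
          rw [show (∫⁻ a, (f*g) a ∂μ) = ∫⁻ a, f a ∂μ by congr 1; funext a; exact hfg a, hT]
      _ ≤ (∫⁻ a, f a ^ (2:ℝ) ∂μ) ^ (1/2 : ℝ) * (∫⁻ a, g a ^ (2:ℝ) ∂μ) ^ (1/2 : ℝ) := hCS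
      _ = _ := by rw [hS, hG]
  have key : ∀ x : ℝ≥0∞, (x ^ (1/2:ℝ)) ^ 2 = x := fun x => by
    rw [← ENNReal.rpow_natCast (x ^ (1/2:ℝ)) 2, ← ENNReal.rpow_mul]
    norm_num
  calc (∑ i ∈ I, μ (A i)) ^ 2
      ≤ ((∑ i ∈ I, ∑ k ∈ I, μ (A i ∩ A k)) ^ (1/2 : ℝ) * (μ U) ^ (1/2 : ℝ)) ^ 2 :=
        pow_le_pow_left₀ (zero_le) hCS' 2
    _ = (∑ i ∈ I, ∑ k ∈ I, μ (A i ∩ A k)) * μ U := by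
        rw [mul_pow, key (∑ i ∈ I, ∑ k ∈ I, μ (A i ∩ A k)), key (μ U)]

/- ### seed patterns and their probabilities -/

def pats (d j : ℕ) (c : Site d) : Finset (Site d) :=
  (Finset.range (mm d j)).image fun i : ℕ => c + (i : ℤ) • e1 d

lemma patmap_inj (hd : 1 ≤ d) (c : Site d) :
    Function.Injective fun i : ℕ => c + (i : ℤ) • e1 d := by
  intro i i' h
  have h0 := congrFun h ⟨0, hd⟩
  simp only [Pi.add_apply, Pi.smul_apply, smul_eq_mul, e1] at h0
  norm_num at h0
  exact_mod_cast h0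

lemma card_pats (hd : 1 ≤ d) (j : ℕ) (c : Site d) : (pats d j c).card = mm d j := by
  rw [pats, Finset.card_image_of_injective _ (patmap_inj hd c), Finset.card_range]

lemma mem_pats {j : ℕ} {c a : Site d} :
    a ∈ pats d j c ↔ ∃ i : ℕ, i < mm d j ∧ a = c + (i : ℤ) • e1 d := by
  simp only [pats, Finset.mem_image, Finset.mem_range]
  constructor
  · rintro ⟨i, hi, rfl⟩; exact ⟨i, hi, rfl⟩
  · rintro ⟨i, hi, rfl⟩; exact ⟨i, hi, rfl⟩

lemma pat_eq_self_iff (hd : 1 ≤ d) (c : Site d) {i : ℕ} :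
    c + (i : ℤ) • e1 d = c ↔ i = 0 := by
  constructor
  · intro he
    have : c + (i : ℤ) • e1 d = c + ((0:ℕ) : ℤ) • e1 d := by simpa using he
    exact patmap_inj hd c this
  · rintro rfl; simp

lemma self_mem_pats (hm : 1 ≤ mm d j) (c : Site d) : c ∈ pats d j c :=
  mem_pats.mpr ⟨0, hm, by simp⟩

lemma seedEvent_eq (hd : 1 ≤ d) (j : ℕ) (c : Site d) :
    {γ : Config d | seed γ j c} = {γ | ∀ x ∈ pats d j c, γ x = decide (x = c)} := by
  ext γ
  simp only [Set.mem_setOf_eq]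
  constructor
  · intro h x hx
    obtain ⟨i, hi, rfl⟩ := mem_pats.mp hx
    rw [h i hi, decide_eq_decide]
    exact (pat_eq_self_iff hd c).symm
  · intro h i hi
    have hx : c + (i : ℤ) • e1 d ∈ pats d j c := mem_pats.mpr ⟨i, hi, rfl⟩
    rw [h _ hx, decide_eq_decide]
    exact pat_eq_self_iff hd c

lemma prob_seed {P : Measure (Config d)} (hP : IsBernoulliHalfProduct P)
    (hd : 1 ≤ d) (j : ℕ) (c : Site d) :
    P {γ | seed γ j c} = (1/2 : ℝ≥0∞) ^ mm d j := by
  rw [seedEvent_eq hd j c, hP.2, card_pats hd]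

lemma prob_seed_pair {P : Measure (Config d)} (hP : IsBernoulliHalfProduct P)
    (hd : 1 ≤ d) {j : ℕ} (hm : 1 ≤ mm d j) {c c' : Site d}
    (hdisj : Disjoint (pats d j c) (pats d j c')) :
    P ({γ | seed γ j c} ∩ {γ | seed γ j c'}) ≤ ((1/2 : ℝ≥0∞) ^ mm d j) ^ 2 := by
  have key : ∀ (b b' : Site d), Disjoint (pats d j b) (pats d j b') →
      ∀ (γ : Config d), seed γ j b → ∀ x ∈ pats d j b, γ x = decide (x = b ∨ x = b') := by
    intro b b' hdj γ hs x hx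
    obtain ⟨i, hi, rfl⟩ := mem_pats.mp hx
    rw [hs i hi, decide_eq_decide]
    by_cases h0 : i = 0
    · subst h0; simp
    · constructor
      · intro h; exact absurd h h0
      · rintro (he | he)
        · exact absurd ((pat_eq_self_iff hd b).mp he) h0
        · exfalso
          have hb' : b' ∈ pats d j b' := self_mem_pats hm b'
          have : b' ∈ pats d j b := he ▸ hx
          exact (Finset.disjoint_left.mp hdj this) hb'
  have hsub : ({γ : Config d | seed γ j c} ∩ {γ | seed γ j c'}) ⊆
      {γ | ∀ x ∈ pats d j c ∪ pats d j c', γ x = decide (x = c ∨ x = c')} := by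
    rintro γ ⟨h1, h2⟩ x hx
    rcases Finset.mem_union.mp hx with hx' | hx'
    · exact key c c' hdisj γ h1 x hx'
    · have := key c' c hdisj.symm γ h2 x hx'
      rw [this, decide_eq_decide]; tauto
  calc P _ ≤ P {γ | ∀ x ∈ pats d j c ∪ pats d j c', γ x = decide (x = c ∨ x = c')} :=
        measure_mono hsub
    _ = (1/2 : ℝ≥0∞) ^ (pats d j c ∪ pats d j c').card := hP.2 _ _
    _ = ((1/2 : ℝ≥0∞) ^ mm d j) ^ 2 := by
        rw [Finset.card_union_of_disjoint hdisj, card_pats hd, card_pats hd,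
          show mm d j + mm d j = mm d j * 2 by ring, pow_mul]

/- ### the candidate grid -/

def grid (d j : ℕ) : Finset (Site d) :=
  Fintype.piFinset fun k : Fin d =>
    if (k : ℕ) = 0 then (Finset.range (4 ^ j)).image (fun t : ℕ => (mm d j : ℤ) * t)
    else (Finset.range (RR d j)).image (fun t : ℕ => (t : ℤ))

lemma mm_pos (hd : 1 ≤ d) {j : ℕ} (hj : 1 ≤ j) : 1 ≤ mm d j := by
  have : 1 * 1 ≤ (2 * d - 1) * j := Nat.mul_le_mul (by omega) hj
  simpa [mm] using this

lemma RR_pos (hd : 1 ≤ d) {j : ℕ} (hj : 1 ≤ j) : 1 ≤ RR d j := by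
  have : 1 * 1 ≤ mm d j * 4 ^ j := Nat.mul_le_mul (mm_pos hd hj) (Nat.one_le_pow _ _ (by norm_num))
  simpa [RR] using this

lemma mem_grid_bound (hd : 1 ≤ d) {j : ℕ} (hj : 1 ≤ j) {v : Site d}
    (hv : v ∈ grid d j) (k : Fin d) : ∃ t : ℕ, t < RR d j ∧ v k = (t : ℤ) := by
  have h := Fintype.mem_piFinset.mp hv k
  by_cases hk : (k : ℕ) = 0
  · rw [if_pos hk] at h
    obtain ⟨t, ht, hvt⟩ := Finset.mem_image.mp h
    rw [Finset.mem_range] at ht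
    refine ⟨mm d j * t, ?_, by rw [← hvt]; push_cast; ring⟩
    have h1 : mm d j * t + mm d j ≤ mm d j * 4 ^ j := by
      have := Nat.mul_le_mul_left (mm d j) (by omega : t + 1 ≤ 4 ^ j)
      calc mm d j * t + mm d j = mm d j * (t + 1) := by ring
        _ ≤ _ := this
    have := mm_pos hd hj
    calc mm d j * t < mm d j * t + mm d j := by omega
      _ ≤ RR d j := h1
  · rw [if_neg hk] at h
    obtain ⟨t, ht, hvt⟩ := Finset.mem_image.mp h
    rw [Finset.mem_range] at ht
    exact ⟨t, ht, hvt.symm⟩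

lemma dinf_cand (hd : 1 ≤ d) {j : ℕ} (hj : 1 ≤ j) (x : Site d) {v : Site d}
    (hv : v ∈ grid d j) : dinf x (x + v) < RR d j := by
  rw [dinf]
  rw [Finset.sup_lt_iff (lt_of_lt_of_le (by simp) (RR_pos hd hj))]
  intro k _
  obtain ⟨t, ht, hvt⟩ := mem_grid_bound hd hj hv k
  have : x k - (x + v) k = -(t : ℤ) := by simp [hvt]
  rw [this, Int.natAbs_neg, Int.natAbs_natCast]
  exact ht

lemma mm_add_j (hd : 1 ≤ d) (j : ℕ) : mm d j + j = 2 * d * j := by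
  calc mm d j + j = ((2 * d - 1) + 1) * j := by rw [add_mul, one_mul]; rfl
    _ = 2 * d * j := by congr 1; omega

lemma grid_card_lb (hd : 1 ≤ d) {j : ℕ} (hj : 1 ≤ j) :
    2 ^ (mm d j + j) ≤ (grid d j).card := by
  rw [grid, Fintype.card_piFinset]
  have hfac : ∀ k : Fin d, 4 ^ j ≤ (if (k : ℕ) = 0 then
      (Finset.range (4 ^ j)).image (fun t : ℕ => (mm d j : ℤ) * t)
      else (Finset.range (RR d j)).image (fun t : ℕ => (t : ℤ))).card := by
    intro k
    by_cases hk : (k : ℕ) = 0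
    · rw [if_pos hk, Finset.card_image_of_injective _ ?_, Finset.card_range]
      intro a b hab
      have hm0 : mm d j ≠ 0 := by have := mm_pos hd hj; omega
      have hm : (mm d j : ℤ) ≠ 0 := Int.natCast_ne_zero.mpr hm0
      have := mul_left_cancel₀ hm hab
      exact_mod_cast this
    · rw [if_neg hk, Finset.card_image_of_injective _ (fun a b hab => by exact_mod_cast hab),
        Finset.card_range]
      calc 4 ^ j = 1 * 4 ^ j := (one_mul _).symm
        _ ≤ mm d j * 4 ^ j := Nat.mul_le_mul_right _ (mm_pos hd hj)
  calc 2 ^ (mm d j + j) = 2 ^ (2 * d * j) := by rw [mm_add_j hd]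
    _ = (4 ^ j) ^ d := by rw [← pow_mul, show 4 = 2^2 by norm_num, ← pow_mul]; ring_nf
    _ = ∏ _k : Fin d, 4 ^ j := by rw [Finset.prod_const, Finset.card_univ, Fintype.card_fin]
    _ ≤ _ := Finset.prod_le_prod' fun k _ => hfac k

lemma grid_pats_disjoint (hd : 1 ≤ d) {j : ℕ} (hj : 1 ≤ j) (x : Site d) {v w : Site d}
    (hv : v ∈ grid d j) (hw : w ∈ grid d j) (hne : v ≠ w) :
    Disjoint (pats d j (x + v)) (pats d j (x + w)) := by
  rw [Finset.disjoint_left]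
  rintro a hav haw
  obtain ⟨i, hi, rfl⟩ := mem_pats.mp hav
  obtain ⟨i', hi', heq⟩ := mem_pats.mp haw
  apply hne
  funext k
  have hk := congrFun heq k
  simp only [Pi.add_apply, Pi.smul_apply, smul_eq_mul] at hk
  by_cases h0 : (k : ℕ) = 0
  · simp only [e1, if_pos h0] at hk
    -- hk : x k + v k + i = x k + w k + i'
    obtain ⟨tv, htv⟩ := Finset.mem_image.mp (by
      have := Fintype.mem_piFinset.mp hv k; rwa [if_pos h0] at this)
    obtain ⟨tw, htw⟩ := Finset.mem_image.mp (by
      have := Fintype.mem_piFinset.mp hw k; rwa [if_pos h0] at this)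
    obtain ⟨htv1, htv2⟩ := htv
    obtain ⟨htw1, htw2⟩ := htw
    rw [← htv2, ← htw2] at hk ⊢
    have hnat : mm d j * tv + i = mm d j * tw + i' := by
      have : (mm d j : ℤ) * tv + i = (mm d j : ℤ) * tw + i' := by linarith [hk]
      exact_mod_cast this
    have hmpos : 0 < mm d j := mm_pos hd hj
    have htv' : (mm d j * tv + i) / mm d j = tv := by
      rw [Nat.mul_add_div hmpos, Nat.div_eq_of_lt hi, add_zero]
    have htw' : (mm d j * tw + i') / mm d j = tw := by
      rw [Nat.mul_add_div hmpos, Nat.div_eq_of_lt hi', add_zero]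
    have : tv = tw := by rw [← htv', ← htw', hnat]
    rw [this]
  · simp only [e1, if_neg h0, mul_zero, add_zero] at hk
    linarith [hk]

/- ### the no-seed-nearby bound -/

lemma prob_noseed {P : Measure (Config d)} (hP : IsBernoulliHalfProduct P)
    (hd : 1 ≤ d) {j : ℕ} (hj : 1 ≤ j) (x : Site d) :
    P {γ | ¬ ∃ c, seed γ j c ∧ dinf x c < RR d j} ≤ (2⁻¹ : ℝ≥0∞) ^ j := by
  classical
  haveI := hP.1
  set m := mm d j with hm
  set p : ℝ≥0∞ := (1/2 : ℝ≥0∞) ^ m with hp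
  set A : Site d → Set (Config d) := fun v => {γ | seed γ j (x + v)} with hA
  set N : ℕ := (grid d j).card with hN
  set T : ℝ≥0∞ := N * p with hT
  have hAm : ∀ v, MeasurableSet (A v) := fun v => measurable_seedEvent j (x + v)
  set U : Set (Config d) := ⋃ v ∈ grid d j, A v with hU
  have hUm : MeasurableSet U := MeasurableSet.biUnion (grid d j).countable_toSet fun v _ => hAm v
  -- event inclusion
  have hsub : {γ : Config d | ¬ ∃ c, seed γ j c ∧ dinf x c < RR d j} ⊆ Uᶜ := by
    intro γ hγ hγU
    simp only [hU, Set.mem_iUnion] at hγU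
    obtain ⟨v, hv, hγv⟩ := hγU
    exact hγ ⟨x + v, hγv, dinf_cand hd hj x hv⟩
  -- sums
  have hTsum : ∑ v ∈ grid d j, P (A v) = T := by
    rw [Finset.sum_congr rfl fun v _ => prob_seed hP hd j (x + v), Finset.sum_const,
      nsmul_eq_mul, hT, hN, hp, hm]
  have hSsum : ∑ v ∈ grid d j, ∑ w ∈ grid d j, P (A v ∩ A w) ≤ T + T ^ 2 := by
    have hterm : ∀ v ∈ grid d j, ∀ w ∈ grid d j,
        P (A v ∩ A w) ≤ p ^ 2 + (if v = w then p else 0) := by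
      intro v hv w hw
      by_cases hvw : v = w
      · subst hvw
        rw [if_pos rfl, Set.inter_self]
        calc P (A v) = p := prob_seed hP hd j (x + v)
          _ ≤ p ^ 2 + p := le_add_self
      · rw [if_neg hvw, add_zero]
        exact prob_seed_pair hP hd (mm_pos hd hj) (grid_pats_disjoint hd hj x hv hw hvw)
    calc ∑ v ∈ grid d j, ∑ w ∈ grid d j, P (A v ∩ A w)
        ≤ ∑ v ∈ grid d j, ∑ w ∈ grid d j, (p ^ 2 + (if v = w then p else 0)) :=
          Finset.sum_le_sum fun v hv => Finset.sum_le_sum fun w hw => hterm v hv w hw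
      _ = ∑ v ∈ grid d j, (N * p ^ 2 + p) := by
          refine Finset.sum_congr rfl fun v hv => ?_
          rw [Finset.sum_add_distrib, Finset.sum_const, nsmul_eq_mul, Finset.sum_ite_eq]
          rw [if_pos hv]
      _ = N * (N * p ^ 2 + p) := by rw [Finset.sum_const, nsmul_eq_mul]
      _ = T + T ^ 2 := by rw [hT]; ring
  -- Chung-Erdos
  have hCE := chung_erdos P (grid d j) A hAm
  rw [hTsum] at hCE
  have hCE2 : T ^ 2 ≤ (T + T ^ 2) * P U := by
    calc T ^ 2 ≤ (∑ v ∈ grid d j, ∑ w ∈ grid d j, P (A v ∩ A w)) * P U := hCE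
      _ ≤ (T + T ^ 2) * P U := mul_le_mul_left hSsum _
  -- T facts
  have hNlb : (2:ℕ) ^ (m + j) ≤ N := grid_card_lb hd hj
  have hpne : p ≠ 0 := by
    rw [hp]; exact pow_ne_zero _ (by norm_num)
  have hpfin : p ≠ ∞ := by
    rw [hp]
    exact ENNReal.pow_ne_top (by norm_num)
  have hT0 : T ≠ 0 := by
    rw [hT]
    refine mul_ne_zero ?_ hpne
    have hN1 : 1 ≤ N := le_trans (Nat.one_le_two_pow) hNlb
    exact Nat.cast_ne_zero.mpr (by omega)
  have hTfin : T ≠ ∞ := by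
    rw [hT]
    exact ENNReal.mul_ne_top (ENNReal.natCast_ne_top N) hpfin
  -- P U ≥ T / (1 + T)
  have hPU : T / (1 + T) ≤ P U := by
    have h1 : T ^ 2 ≤ P U * (T * (1 + T)) := by
      calc T ^ 2 ≤ (T + T ^ 2) * P U := hCE2
        _ = P U * (T * (1 + T)) := by ring
    have h2 : T ^ 2 / (T * (1 + T)) ≤ P U := ENNReal.div_le_of_le_mul h1
    calc T / (1 + T) = T * T / (T * (1 + T)) := by
          rw [ENNReal.mul_div_mul_left _ _ hT0 hTfin]
      _ = T ^ 2 / (T * (1 + T)) := by rw [sq]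
      _ ≤ P U := h2
  -- conclude
  have h1T0 : (1 + T) ≠ 0 := by simp
  have h1Tfin : (1 + T) ≠ ∞ := by
    rw [ENNReal.add_ne_top]; exact ⟨one_ne_top, hTfin⟩
  have hcompl : P Uᶜ ≤ 1 / (1 + T) := by
    rw [prob_compl_eq_one_sub hUm, tsub_le_iff_right]
    calc (1:ℝ≥0∞) = (1 + T) / (1 + T) := (ENNReal.div_self h1T0 h1Tfin).symm
      _ = 1 / (1 + T) + T / (1 + T) := ENNReal.div_add_div_same.symm
      _ ≤ 1 / (1 + T) + P U := add_le_add le_rfl hPU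
  have hTlb : (2:ℝ≥0∞) ^ j ≤ T := by
    have : ((2:ℕ) ^ (m + j) : ℝ≥0∞) ≤ (N : ℝ≥0∞) := by exact_mod_cast hNlb
    calc (2:ℝ≥0∞) ^ j = (2:ℝ≥0∞) ^ (m + j) * p := by
          rw [hp, pow_add]
          rw [show ((1:ℝ≥0∞)/2) = 2⁻¹ by rw [one_div]]
          rw [show (2:ℝ≥0∞) ^ m * 2 ^ j * 2⁻¹ ^ m = (2 * 2⁻¹) ^ m * 2 ^ j by ring]
          rw [ENNReal.mul_inv_cancel (by norm_num) (by norm_num), one_pow, one_mul]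
      _ ≤ (N : ℝ≥0∞) * p := by
          apply mul_le_mul_left ?_ p
          calc (2:ℝ≥0∞) ^ (m+j) = ((2:ℕ) ^ (m + j) : ℝ≥0∞) := by push_cast; ring
            _ ≤ (N : ℝ≥0∞) := this
      _ = T := hT.symm
  calc P {γ : Config d | ¬ ∃ c, seed γ j c ∧ dinf x c < RR d j} ≤ P Uᶜ := measure_mono hsub
    _ ≤ 1 / (1 + T) := hcompl
    _ ≤ 1 / T := ENNReal.div_le_div_left le_add_self 1
    _ ≤ 1 / (2:ℝ≥0∞) ^ j := ENNReal.div_le_div_left hTlb 1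
    _ = (2⁻¹ : ℝ≥0∞) ^ j := by rw [one_div, ENNReal.inv_pow]


/- ### the shell union bound -/

def face (d j : ℕ) (z : Site d) (i : Fin d) (s : Bool) : Finset (Site d) :=
  Fintype.piFinset fun k =>
    if k = i then {z i + (if s then (RR d j : ℤ) else -(RR d j : ℤ))}
    else Finset.Icc (z k - RR d j) (z k + RR d j)

lemma shell_cover (hd : 1 ≤ d) (j : ℕ) (z : Site d) :
    {γ : Config d | inShell γ j z} ⊆
      ⋃ (i : Fin d), ⋃ (s : Bool), ⋃ (c : Site d) (_ : c ∈ face d j z i s),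
        {γ : Config d | seed γ j c} := by
  rintro γ ⟨c, hc, hdist⟩
  haveI : Nonempty (Fin d) := ⟨⟨0, hd⟩⟩
  obtain ⟨i, -, hi⟩ := Finset.exists_mem_eq_sup (Finset.univ : Finset (Fin d))
    Finset.univ_nonempty (fun k => (z k - c k).natAbs)
  rw [dinf] at hdist
  rw [hdist] at hi
  have hball : ∀ k, (z k - c k).natAbs ≤ RR d j := by
    intro k
    rw [← hdist]
    exact Finset.le_sup (f := fun k => (z k - c k).natAbs) (Finset.mem_univ k)
  have hcase : c i = z i + (RR d j : ℤ) ∨ c i = z i + (-(RR d j : ℤ)) := by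
    have := hi.symm
    omega
  set s : Bool := decide (c i = z i + (RR d j : ℤ)) with hs
  refine Set.mem_iUnion.mpr ⟨i, Set.mem_iUnion.mpr ⟨s, Set.mem_iUnion.mpr ⟨c,
    Set.mem_iUnion.mpr ⟨?_, hc⟩⟩⟩⟩
  rw [face, Fintype.mem_piFinset]
  intro k
  by_cases hk : k = i
  · rw [if_pos hk, Finset.mem_singleton, hk]
    rcases hcase with h | h
    · rw [hs, if_pos (by rw [decide_eq_true_eq]; exact h)]; exact h
    · have hne : ¬ (c i = z i + (RR d j : ℤ)) ∨ c i = z i + (RR d j : ℤ) := by tauto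
      by_cases h2 : c i = z i + (RR d j : ℤ)
      · rw [hs, if_pos (by rw [decide_eq_true_eq]; exact h2)]; exact h2
      · rw [hs, if_neg (by rw [decide_eq_true_eq]; exact h2)]; exact h
  · rw [if_neg hk, Finset.mem_Icc]
    have := hball k
    omega

lemma card_face (hd : 1 ≤ d) (j : ℕ) (z : Site d) (i : Fin d) (s : Bool) :
    (face d j z i s).card ≤ (2 * RR d j + 1) ^ (d - 1) := by
  rw [face, Fintype.card_piFinset]
  have h1 : ∀ k : Fin d, ((if k = i then ({z i + (if s then (RR d j : ℤ) else -(RR d j : ℤ))} :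
      Finset ℤ) else Finset.Icc (z k - RR d j) (z k + RR d j))).card
      = if k = i then 1 else (2 * RR d j + 1) := by
    intro k
    by_cases hk : k = i
    · rw [if_pos hk, if_pos hk, Finset.card_singleton]
    · rw [if_neg hk, if_neg hk, Int.card_Icc]
      have : (z k + RR d j + 1 - (z k - RR d j)) = (2 * RR d j + 1 : ℤ) := by ring
      rw [this]
      omega
  rw [Finset.prod_congr rfl fun k _ => h1 k]
  calc ∏ k : Fin d, (if k = i then 1 else (2 * RR d j + 1))
      = (if i = i then 1 else (2 * RR d j + 1)) *
        ∏ k ∈ Finset.univ.erase i, (if k = i then 1 else (2 * RR d j + 1)) :=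
        (Finset.mul_prod_erase _ _ (Finset.mem_univ i)).symm
    _ ≤ 1 * (2 * RR d j + 1) ^ (d - 1) := by
        rw [if_pos rfl]
        apply mul_le_mul_right ?_ 1
        calc ∏ k ∈ Finset.univ.erase i, (if k = i then 1 else (2 * RR d j + 1))
            ≤ ∏ _k ∈ Finset.univ.erase i, (2 * RR d j + 1) := by
              apply Finset.prod_le_prod' fun k hk => ?_
              rw [if_neg (Finset.mem_erase.mp hk).1]
          _ = (2 * RR d j + 1) ^ (d - 1) := by
              rw [Finset.prod_const, Finset.card_erase_of_mem (Finset.mem_univ i),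
                Finset.card_univ, Fintype.card_fin]
    _ = (2 * RR d j + 1) ^ (d - 1) := one_mul _

lemma prob_shell {P : Measure (Config d)} (hP : IsBernoulliHalfProduct P)
    (hd : 1 ≤ d) (j : ℕ) (z : Site d) :
    P {γ | inShell γ j z} ≤
      ((2 * d : ℕ) : ℝ≥0∞) * (((2 * RR d j + 1) ^ (d - 1) : ℕ) : ℝ≥0∞)
        * (1/2 : ℝ≥0∞) ^ mm d j := by
  calc P {γ | inShell γ j z}
      ≤ P (⋃ (i : Fin d), ⋃ (s : Bool), ⋃ (c : Site d) (_ : c ∈ face d j z i s),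
          {γ : Config d | seed γ j c}) := measure_mono (shell_cover hd j z)
    _ ≤ ∑ i : Fin d, P (⋃ (s : Bool), ⋃ (c : Site d) (_ : c ∈ face d j z i s),
          {γ : Config d | seed γ j c}) := measure_iUnion_fintype_le _ _
    _ ≤ ∑ i : Fin d, ∑ s : Bool, P (⋃ (c : Site d) (_ : c ∈ face d j z i s),
          {γ : Config d | seed γ j c}) :=
        Finset.sum_le_sum fun i _ => measure_iUnion_fintype_le _ _
    _ ≤ ∑ i : Fin d, ∑ s : Bool, ∑ c ∈ face d j z i s, P {γ : Config d | seed γ j c} :=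
        Finset.sum_le_sum fun i _ => Finset.sum_le_sum fun s _ =>
          measure_biUnion_finset_le _ _
    _ ≤ ∑ _i : Fin d, ∑ _s : Bool, (((2 * RR d j + 1) ^ (d - 1) : ℕ) : ℝ≥0∞)
          * (1/2 : ℝ≥0∞) ^ mm d j := by
        refine Finset.sum_le_sum fun i _ => Finset.sum_le_sum fun s _ => ?_
        rw [Finset.sum_congr rfl fun c _ => prob_seed hP hd j c, Finset.sum_const,
          nsmul_eq_mul]
        apply mul_le_mul_left ?_ _
        exact_mod_cast card_face hd j z i s
    _ = ((2 * d : ℕ) : ℝ≥0∞) * (((2 * RR d j + 1) ^ (d - 1) : ℕ) : ℝ≥0∞)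
          * (1/2 : ℝ≥0∞) ^ mm d j := by
        rw [Finset.sum_const, Finset.sum_const, Finset.card_univ, Finset.card_univ,
          Fintype.card_fin, Fintype.card_bool, nsmul_eq_mul, nsmul_eq_mul]
        push_cast
        ring

/- ### summability of shell probabilities -/

lemma mm_split (hd : 1 ≤ d) (j : ℕ) : mm d j = 2 * ((d - 1) * j) + j := by
  obtain ⟨e, rfl⟩ : ∃ e, d = e + 1 := ⟨d - 1, by omega⟩
  have h1 : 2 * (e + 1) - 1 = 2 * e + 1 := by omega
  have h2 : e + 1 - 1 = e := by omega
  rw [mm, h1, h2]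
  ring

lemma shell_real_bound (hd : 1 ≤ d) (j : ℕ) :
    ((2 * d : ℕ) : ℝ) * (((2 * RR d j + 1) ^ (d - 1) : ℕ) : ℝ) * (1/2 : ℝ) ^ mm d j
      ≤ ((2 * d : ℕ) : ℝ) * ((3 * (2 * d - 1) : ℕ) : ℝ) ^ (d - 1)
        * ((j : ℝ) + 1) ^ (d - 1) * (1/2 : ℝ) ^ j := by
  have hnat : 2 * RR d j + 1 ≤ 3 * (2 * d - 1) * (j + 1) * 4 ^ j := by
    have h4 : 1 ≤ 4 ^ j := Nat.one_le_pow _ _ (by norm_num)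
    have ha : 1 ≤ 2 * d - 1 := by omega
    have key : 1 ≤ (2 * d - 1) * (j + 1) * 4 ^ j :=
      Nat.one_le_iff_ne_zero.mpr (by positivity)
    have h2 : RR d j ≤ (2 * d - 1) * (j + 1) * 4 ^ j := by
      rw [RR, mm]
      exact Nat.mul_le_mul_right _ (Nat.mul_le_mul_left _ (by omega))
    calc 2 * RR d j + 1 ≤ 2 * ((2 * d - 1) * (j + 1) * 4 ^ j) + (2 * d - 1) * (j + 1) * 4 ^ j := by
          omega
      _ = 3 * (2 * d - 1) * (j + 1) * 4 ^ j := by ring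
  have hr : ((2 * RR d j + 1 : ℕ) : ℝ) ≤ ((3 * (2 * d - 1) : ℕ) : ℝ) * ((j : ℝ) + 1) * 4 ^ j := by
    calc ((2 * RR d j + 1 : ℕ) : ℝ) ≤ ((3 * (2 * d - 1) * (j + 1) * 4 ^ j : ℕ) : ℝ) := by
          exact_mod_cast hnat
      _ = ((3 * (2 * d - 1) : ℕ) : ℝ) * ((j : ℝ) + 1) * 4 ^ j := by push_cast; ring
  have hpow : (((2 * RR d j + 1) ^ (d - 1) : ℕ) : ℝ)
      ≤ (((3 * (2 * d - 1) : ℕ) : ℝ) * ((j : ℝ) + 1)) ^ (d - 1) * (4 ^ j) ^ (d - 1) := by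
    rw [← mul_pow]
    push_cast
    apply pow_le_pow_left₀ (by positivity) (by push_cast at hr ⊢; linarith [hr])
  have hhalf : (1/2 : ℝ) ^ mm d j = ((1/4 : ℝ)) ^ ((d - 1) * j) * (1/2 : ℝ) ^ j := by
    rw [mm_split hd j, pow_add, pow_mul]
    norm_num
  have hcancel : ((4:ℝ) ^ j) ^ (d - 1) * ((1/4 : ℝ)) ^ ((d - 1) * j) = 1 := by
    rw [← pow_mul, mul_comm j (d-1), ← mul_pow]
    norm_num
  calc ((2 * d : ℕ) : ℝ) * (((2 * RR d j + 1) ^ (d - 1) : ℕ) : ℝ) * (1/2 : ℝ) ^ mm d j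
      ≤ ((2 * d : ℕ) : ℝ) * ((((3 * (2 * d - 1) : ℕ) : ℝ) * ((j : ℝ) + 1)) ^ (d - 1)
          * (4 ^ j) ^ (d - 1)) * ((1/4 : ℝ) ^ ((d - 1) * j) * (1/2 : ℝ) ^ j) := by
        rw [hhalf]
        apply mul_le_mul_of_nonneg_right (mul_le_mul_of_nonneg_left hpow (by positivity))
          (by positivity)
    _ = ((2 * d : ℕ) : ℝ) * ((((3 * (2 * d - 1) : ℕ) : ℝ) * ((j : ℝ) + 1)) ^ (d - 1))
          * ((4 ^ j) ^ (d - 1) * (1/4 : ℝ) ^ ((d - 1) * j)) * (1/2 : ℝ) ^ j := by ring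
    _ = ((2 * d : ℕ) : ℝ) * ((3 * (2 * d - 1) : ℕ) : ℝ) ^ (d - 1)
          * ((j : ℝ) + 1) ^ (d - 1) * (1/2 : ℝ) ^ j := by
        rw [hcancel, mul_pow]; ring

lemma summable_shell_bound (hd : 1 ≤ d) :
    Summable (fun j : ℕ => ((2 * d : ℕ) : ℝ) * ((3 * (2 * d - 1) : ℕ) : ℝ) ^ (d - 1)
      * ((j : ℝ) + 1) ^ (d - 1) * (1/2 : ℝ) ^ j) := by
  have hbase : Summable (fun n : ℕ => (n : ℝ) ^ (d - 1) * (1/2 : ℝ) ^ n) :=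
    summable_pow_mul_geometric_of_norm_lt_one (d - 1)
      (by rw [Real.norm_eq_abs, abs_of_nonneg (by norm_num : (0:ℝ) ≤ 1/2)]; norm_num)
  have hshift : Summable (fun j : ℕ => ((j + 1 : ℕ) : ℝ) ^ (d - 1) * (1/2 : ℝ) ^ (j + 1)) := by
    exact (summable_nat_add_iff 1).mpr hbase
  have h2 : Summable (fun j : ℕ => (((2 * d : ℕ) : ℝ) * ((3 * (2 * d - 1) : ℕ) : ℝ) ^ (d - 1) * 2)
      * (((j + 1 : ℕ) : ℝ) ^ (d - 1) * (1/2 : ℝ) ^ (j + 1))) := hshift.mul_left _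
  apply h2.congr
  intro j
  push_cast
  ring

lemma tsum_shell_ne_top {P : Measure (Config d)} (hP : IsBernoulliHalfProduct P)
    (hd : 1 ≤ d) (z : Site d) :
    (∑' j : ℕ, P {γ | inShell γ j z}) ≠ ∞ := by
  set g : ℕ → ℝ := fun j => ((2 * d : ℕ) : ℝ) * ((3 * (2 * d - 1) : ℕ) : ℝ) ^ (d - 1)
      * ((j : ℝ) + 1) ^ (d - 1) * (1/2 : ℝ) ^ j with hg
  have hgnn : ∀ j, 0 ≤ g j := fun j => by rw [hg]; positivity
  have hsum : Summable g := summable_shell_bound hd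
  have hle : ∀ j, P {γ | inShell γ j z} ≤ ENNReal.ofReal (g j) := by
    intro j
    calc P {γ | inShell γ j z}
        ≤ ((2 * d : ℕ) : ℝ≥0∞) * (((2 * RR d j + 1) ^ (d - 1) : ℕ) : ℝ≥0∞)
          * (1/2 : ℝ≥0∞) ^ mm d j := prob_shell hP hd j z
      _ = ENNReal.ofReal (((2 * d : ℕ) : ℝ) * (((2 * RR d j + 1) ^ (d - 1) : ℕ) : ℝ)
          * (1/2 : ℝ) ^ mm d j) := by
          have h12 : ENNReal.ofReal ((1:ℝ)/2) = (1/2 : ℝ≥0∞) := by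
            rw [ENNReal.ofReal_div_of_pos (by norm_num), ENNReal.ofReal_one,
              ENNReal.ofReal_ofNat]
          rw [ENNReal.ofReal_mul (by positivity), ENNReal.ofReal_mul (by positivity),
            ENNReal.ofReal_natCast, ENNReal.ofReal_natCast, ENNReal.ofReal_pow (by norm_num),
            h12]
      _ ≤ ENNReal.ofReal (g j) :=
          ENNReal.ofReal_le_ofReal (shell_real_bound hd j)
  apply ne_top_of_lt
  calc ∑' j : ℕ, P {γ | inShell γ j z} ≤ ∑' j : ℕ, ENNReal.ofReal (g j) :=
        ENNReal.tsum_le_tsum hle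
    _ = ENNReal.ofReal (∑' j, g j) := (ENNReal.ofReal_tsum_of_nonneg hgnn hsum).symm
    _ < ∞ := ENNReal.ofReal_lt_top

/- ### Borel–Cantelli consequences -/

lemma tsum_noseed_ne_top {P : Measure (Config d)} (hP : IsBernoulliHalfProduct P)
    (hd : 1 ≤ d) (x : Site d) :
    (∑' j : ℕ, P {γ | ¬ ∃ c, seed γ j c ∧ dinf x c < RR d j}) ≠ ∞ := by
  haveI := hP.1
  have hle : ∀ j : ℕ, P {γ | ¬ ∃ c, seed γ j c ∧ dinf x c < RR d j} ≤ 2 * (2⁻¹ : ℝ≥0∞) ^ j := by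
    intro j
    rcases Nat.eq_zero_or_pos j with hj | hj
    · subst hj
      calc P _ ≤ 1 := prob_le_one
        _ ≤ 2 * (2⁻¹ : ℝ≥0∞) ^ 0 := by norm_num
    · calc P _ ≤ (2⁻¹ : ℝ≥0∞) ^ j := prob_noseed hP hd hj x
        _ ≤ 2 * (2⁻¹ : ℝ≥0∞) ^ j := le_mul_of_one_le_left (by positivity) (by norm_num)
  apply ne_top_of_lt
  calc (∑' j : ℕ, P {γ | ¬ ∃ c, seed γ j c ∧ dinf x c < RR d j})
      ≤ ∑' j : ℕ, 2 * (2⁻¹ : ℝ≥0∞) ^ j := ENNReal.tsum_le_tsum hle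
    _ = 2 * (1 - 2⁻¹)⁻¹ := by rw [ENNReal.tsum_mul_left, ENNReal.tsum_geometric]
    _ = 4 := by rw [ENNReal.one_sub_inv_two]; norm_num
    _ < ∞ := by norm_num

def Good (γ : Config d) : Prop :=
  (∀ x : Site d, ∀ᶠ j in Filter.atTop, ∃ c, seed γ j c ∧ dinf x c < RR d j) ∧
  (∀ z : Site d, ∀ᶠ j in Filter.atTop, ¬ inShell γ j z)

lemma ae_good {P : Measure (Config d)} (hP : IsBernoulliHalfProduct P) (hd : 1 ≤ d) :
    ∀ᵐ γ ∂P, Good γ := by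
  haveI := hP.1
  show ∀ᵐ γ ∂P, (∀ x : Site d, ∀ᶠ j in Filter.atTop,
      ∃ c, seed γ j c ∧ dinf x c < RR d j) ∧
      (∀ z : Site d, ∀ᶠ j in Filter.atTop, ¬ inShell γ j z)
  apply Filter.Eventually.and
  · rw [MeasureTheory.ae_all_iff]
    intro x
    have h := MeasureTheory.ae_eventually_notMem
      (s := fun j => {γ : Config d | ¬ ∃ c, seed γ j c ∧ dinf x c < RR d j})
      (tsum_noseed_ne_top hP hd x)
    filter_upwards [h] with γ hγ
    filter_upwards [hγ] with j hj
    simpa using hj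
  · rw [MeasureTheory.ae_all_iff]
    intro z
    have h := MeasureTheory.ae_eventually_notMem
      (s := fun j => {γ : Config d | inShell γ j z})
      (tsum_shell_ne_top hP hd z)
    filter_upwards [h] with γ hγ
    filter_upwards [hγ] with j hj
    exact hj

/- ### finiteness of clumps for good configurations -/

lemma CC_of_wall {γ : Config d} {n : ℕ} {x : Site d} (hw : wall γ n x) :
    CC γ n x = {x} := by
  apply Set.eq_singleton_iff_unique_mem.mpr
  refine ⟨Relation.ReflTransGen.refl, fun y hy => ?_⟩
  rcases Relation.ReflTransGen.cases_head hy with rfl | ⟨b, hr, -⟩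
  · rfl
  · exact absurd hw hr.2.1

lemma CC_finite {γ : Config d} (hg : Good γ) (n : ℕ) (x : Site d) :
    (CC γ n x).Finite := by
  by_cases hw : wall γ n x
  · rw [CC_of_wall hw]; exact Set.finite_singleton x
  · obtain ⟨j, hcj, hjn⟩ := ((hg.1 x).and (Filter.eventually_gt_atTop n)).exists
    obtain ⟨c, hc, hdist⟩ := hcj
    have hsub : CC γ n x ⊆ {y | dinf y c < RR d j} := by
      intro y hy
      simp only [Set.mem_setOf_eq]
      induction hy with
      | refl => exact hdist
      | tail hab hrel ih =>
        rename_i b y'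
        have h1 : dinf y' c ≤ 1 + dinf b c := by
          calc dinf y' c ≤ dinf y' b + dinf b c := dinf_triangle _ _ _
            _ = 1 + dinf b c := by rw [dinf_comm y' b, hrel.1]
        have h2 : dinf b c < RR d j := ih
        have h2' : dinf y' c ≤ RR d j := by omega
        rcases lt_or_eq_of_le h2' with h3 | h3
        · exact h3
        · exact absurd ⟨j, hjn, c, hc, h3⟩ hrel.2.2
    apply Set.Finite.subset ?_ hsub
    apply Set.Finite.subset (Set.Finite.pi (fun k : Fin d =>
      Set.finite_Icc (c k - RR d j) (c k + RR d j)))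
    intro y hy
    rw [Set.mem_pi]
    intro k _
    have hk : (y k - c k).natAbs ≤ dinf y c :=
      Finset.le_sup (f := fun i => (y i - c i).natAbs) (Finset.mem_univ k)
    have : (y k - c k).natAbs < RR d j := lt_of_le_of_lt hk hy
    rw [Set.mem_Icc]
    omega

/- ### exhaustion -/

lemma path_exists (y x : Site d) :
    Relation.ReflTransGen (fun a b : Site d => dinf a b = 1) x y := by
  obtain ⟨K, hK⟩ : ∃ K, (∑ k : Fin d, (x k - y k).natAbs) = K := ⟨_, rfl⟩
  induction K using Nat.strong_induction_on generalizing x with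
  | _ K ih =>
  by_cases h0 : K = 0
  · subst h0
    have hxy : x = y := by
      funext k
      have h1 : (x k - y k).natAbs ≤ 0 := by
        rw [← hK]
        exact Finset.single_le_sum (f := fun i => (x i - y i).natAbs)
          (fun i _ => Nat.zero_le _) (Finset.mem_univ k)
      omega
    rw [hxy]
  · obtain ⟨k, -, hk⟩ := Finset.exists_ne_zero_of_sum_ne_zero (by rw [hK]; exact h0)
    set s : ℤ := if x k < y k then 1 else -1 with hs
    set x' : Site d := Function.update x k (x k + s) with hx'
    have hxk : x' k = x k + s := by rw [hx', Function.update_self]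
    have habs : (x k - x' k).natAbs = 1 := by
      rw [hxk, hs]
      by_cases h : x k < y k
      · rw [if_pos h]; omega
      · rw [if_neg h]; omega
    have hstep : dinf x x' = 1 := by
      apply le_antisymm
      · rw [dinf]
        apply Finset.sup_le
        intro i _
        by_cases hik : i = k
        · subst hik; omega
        · rw [hx', Function.update_of_ne hik]
          simp
      · calc 1 = (x k - x' k).natAbs := habs.symm
          _ ≤ dinf x x' :=
              Finset.le_sup (f := fun i => (x i - x' i).natAbs) (Finset.mem_univ k)
    have hsum' : (∑ i : Fin d, (x' i - y i).natAbs) = K - 1 := by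
      have hold := Finset.add_sum_erase Finset.univ
        (fun i => (x i - y i).natAbs) (Finset.mem_univ k)
      have hnew := Finset.add_sum_erase Finset.univ
        (fun i => (x' i - y i).natAbs) (Finset.mem_univ k)
      have hE : ∑ i ∈ Finset.univ.erase k, (x' i - y i).natAbs
          = ∑ i ∈ Finset.univ.erase k, (x i - y i).natAbs :=
        Finset.sum_congr rfl fun i hi => by
          rw [hx', Function.update_of_ne (Finset.mem_erase.mp hi).1]
      have hdec : (x' k - y k).natAbs + 1 = (x k - y k).natAbs := by
        rw [hxk, hs]
        by_cases h : x k < y k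
        · rw [if_pos h]; omega
        · rw [if_neg h]; omega
      omega
    have hrec := ih (K - 1) (by omega) x' hsum'
    exact Relation.ReflTransGen.head hstep hrec

lemma exhaust {γ : Config d} (hg : Good γ) (y : Site d) :
    ∃ n : ℕ, 1 ≤ n ∧ y ∈ CC γ n 0 := by
  obtain ⟨l, hchain, hlast⟩ :=
    List.exists_isChain_cons_of_relationReflTransGen (path_exists y (0 : Site d))
  choose N hN using fun z : Site d => Filter.eventually_atTop.mp (hg.2 z)
  set pts : List (Site d) := (0 : Site d) :: l with hpts
  set n : ℕ := 1 + pts.foldr (fun z acc => max (N z) acc) 0 with hn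
  have hfold : ∀ (L : List (Site d)) (z : Site d), z ∈ L →
      N z ≤ L.foldr (fun z acc => max (N z) acc) 0 := by
    intro L
    induction L with
    | nil => intro z hz; simp at hz
    | cons a t iht =>
      intro z hz
      rcases List.mem_cons.mp hz with rfl | hz'
      · exact le_max_left _ _
      · exact le_trans (iht z hz') (le_max_right _ _)
  have hnw : ∀ z ∈ pts, ¬ wall γ n z := by
    rintro z hz ⟨j, hj, hsh⟩
    have h1 : N z ≤ n := le_trans (hfold pts z hz) (by omega)
    exact hN z j (by omega) hsh
  have hupgrade : ∀ (a : Site d) (L : List (Site d)),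
      List.Chain (fun u v : Site d => dinf u v = 1) a L →
      (∀ z ∈ a :: L, ¬ wall γ n z) → List.Chain (rel γ n) a L := by
    intro a L
    induction L generalizing a with
    | nil => intro _ _; exact List.IsChain.singleton _
    | cons b t iht =>
      intro hch hw
      simp only [List.Chain, List.chain_cons] at hch ⊢
      refine ⟨⟨hch.1, hw a (by simp), hw b (by simp)⟩, iht b hch.2 ?_⟩
      intro z hz
      apply hw
      rcases List.mem_cons.mp hz with rfl | hz'
      · simp
      · simp [hz']
  have hchain' : List.Chain (rel γ n) 0 l := by
    apply hupgrade _ _ hchain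
    exact hnw
  exact ⟨n, by omega, List.relationReflTransGen_of_exists_isChain_cons l hchain' hlast⟩


end ClumpAux

/-- A locally finite connected clumping rule exists almost surely. -/
theorem statement3 (d : ℕ) (hd : 1 ≤ d)
    (P : Measure (Config d)) (hP : IsBernoulliHalfProduct P) :
    ∃ C : Config d → ℕ → Site d → Set (Site d),
      (∀ (n : ℕ) (x y : Site d), MeasurableSet {γ | y ∈ C γ n x}) ∧
      (∀ (γ : Config d) (n : ℕ), 1 ≤ n → ∀ x y z : Site d,
        x ∈ C γ n x ∧
        ((C γ n x ∩ C γ n y).Nonempty → C γ n x = C γ n y) ∧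
        C γ n x ⊆ C γ (n + 1) x ∧
        C (shiftCfg z γ) n (x + z) = (· + z) '' C γ n x) ∧
      (∀ᵐ γ ∂P, (∀ (n : ℕ) (x : Site d), 1 ≤ n → (C γ n x).Finite) ∧
        ⋃ n ∈ {n : ℕ | 1 ≤ n}, C γ n 0 = Set.univ) := by
  classical
  haveI := hP.1
  refine ⟨ClumpAux.CC, ?_, ?_, ?_⟩
  · intro n x y
    exact ClumpAux.measurable_CC n x y
  · intro γ n hn x y z
    exact ⟨ClumpAux.mem_CC_self γ n x, fun h => ClumpAux.CC_glue γ n h,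
      ClumpAux.CC_mono γ n x, ClumpAux.CC_shift z γ n x⟩
  · filter_upwards [ClumpAux.ae_good hP hd] with γ hγ
    refine ⟨fun n x _ => ClumpAux.CC_finite hγ n x, ?_⟩
    apply Set.eq_univ_of_forall
    intro y
    obtain ⟨n, hn1, hmem⟩ := ClumpAux.exhaust hγ y
    exact Set.mem_biUnion hn1 hmem

end
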